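/- Let C ⊆ F_q^{n×m} be an F_q-linear rank-metric code such that dim C(U) is divisible by m for every subspace U ⊆ F_q^n (an m-almost affine rank-metric code). Then the function ρ(U) = (dim C - dim C(U^⊥))/m is integer-valued on all subspaces U, and the associated q-polymatroid M[C] is a q-matroid. -/

import Mathlib

open Matrix

variable {F : Type*} [Field F]

/-- Column space of a matrix: the span of its columns. -/
def colSpace {n m : ℕ} (M : Matrix (Fin n) (Fin m) F) : Submodule F (Fin n → F) :=
  Submodule.span F (Set.range Mᵀ)

lemma colSpace_le_iff {n m : ℕ} (M : Matrix (Fin n) (Fin m) F) (U : Submodule F (Fin n → F)) :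
    colSpace M ≤ U ↔ ∀ j, Mᵀ j ∈ U := by
  rw [colSpace, Submodule.span_le]
  constructor
  · intro h j
    exact h ⟨j, rfl⟩
  · rintro h _ ⟨j, rfl⟩
    exact h j

/-- `C(U)`: the codewords of `C` whose column space is contained in `U`. -/
def codeCU {n m : ℕ} (C : Submodule F (Matrix (Fin n) (Fin m) F))
    (U : Submodule F (Fin n → F)) : Submodule F (Matrix (Fin n) (Fin m) F) where
  carrier := {M | M ∈ C ∧ colSpace M ≤ U}
  add_mem' := by
    rintro a b ⟨haC, ha⟩ ⟨hbC, hb⟩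
    refine ⟨C.add_mem haC hbC, (colSpace_le_iff _ _).2 fun j => ?_⟩
    have h := U.add_mem ((colSpace_le_iff a U).1 ha j) ((colSpace_le_iff b U).1 hb j)
    exact h
  zero_mem' := by
    exact ⟨C.zero_mem, (colSpace_le_iff _ _).2 fun j => U.zero_mem⟩
  smul_mem' := by
    rintro c a ⟨haC, ha⟩
    refine ⟨C.smul_mem c haC, (colSpace_le_iff _ _).2 fun j => ?_⟩
    have h := U.smul_mem c ((colSpace_le_iff a U).1 ha j)
    exact h

/-- Orthogonal complement with respect to the standard (dot-product) bilinear form. -/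
def perp {n : ℕ} (U : Submodule F (Fin n → F)) : Submodule F (Fin n → F) where
  carrier := {v | ∀ u ∈ U, v ⬝ᵥ u = 0}
  add_mem' := by
    intro a b ha hb u hu
    rw [add_dotProduct, ha u hu, hb u hu, add_zero]
  zero_mem' := by
    intro u hu
    rw [zero_dotProduct]
  smul_mem' := by
    intro c a ha u hu
    rw [smul_dotProduct, ha u hu, smul_zero]

/-- The minimum rank distance of a matrix code. -/
noncomputable def minRankDist {n m : ℕ} (C : Submodule F (Matrix (Fin n) (Fin m) F)) : ℕ :=
  sInf {r : ℕ | ∃ M ∈ C, M ≠ 0 ∧ M.rank = r}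

/-- The rank function of the q-polymatroid associated to a matrix rank-metric code. -/
noncomputable def rhoCode {n m : ℕ} (C : Submodule F (Matrix (Fin n) (Fin m) F))
    (U : Submodule F (Fin n → F)) : ℚ :=
  ((Module.finrank F C : ℚ) - (Module.finrank F (codeCU C (perp U)) : ℚ)) / (m : ℚ)


section Aux

lemma mem_codeCU {n m : ℕ} {C : Submodule F (Matrix (Fin n) (Fin m) F)}
    {U : Submodule F (Fin n → F)} {M : Matrix (Fin n) (Fin m) F} :
    M ∈ codeCU C U ↔ M ∈ C ∧ colSpace M ≤ U := Iff.rfl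

lemma codeCU_top {n m : ℕ} (C : Submodule F (Matrix (Fin n) (Fin m) F)) :
    codeCU C ⊤ = C := by
  ext M; simp [mem_codeCU]

lemma codeCU_le_code {n m : ℕ} (C : Submodule F (Matrix (Fin n) (Fin m) F))
    (U : Submodule F (Fin n → F)) : codeCU C U ≤ C := fun M h => h.1

lemma codeCU_mono {n m : ℕ} (C : Submodule F (Matrix (Fin n) (Fin m) F))
    {U V : Submodule F (Fin n → F)} (h : U ≤ V) : codeCU C U ≤ codeCU C V :=
  fun M hM => ⟨hM.1, hM.2.trans h⟩

lemma codeCU_inf {n m : ℕ} (C : Submodule F (Matrix (Fin n) (Fin m) F))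
    (U V : Submodule F (Fin n → F)) : codeCU C (U ⊓ V) = codeCU C U ⊓ codeCU C V := by
  ext M
  simp only [mem_codeCU, Submodule.mem_inf, le_inf_iff]
  tauto

lemma mem_perp {n : ℕ} {U : Submodule F (Fin n → F)} {v : Fin n → F} :
    v ∈ perp U ↔ ∀ u ∈ U, v ⬝ᵥ u = 0 := Iff.rfl

lemma perp_antitone {n : ℕ} {U V : Submodule F (Fin n → F)} (h : U ≤ V) :
    perp V ≤ perp U := fun v hv u hu => hv u (h hu)

lemma perp_sup {n : ℕ} (U V : Submodule F (Fin n → F)) :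
    perp (U ⊔ V) = perp U ⊓ perp V := by
  apply le_antisymm
  · exact le_inf (perp_antitone le_sup_left) (perp_antitone le_sup_right)
  · rintro v ⟨h1, h2⟩ u hu
    obtain ⟨x, hx, y, hy, rfl⟩ := Submodule.mem_sup.1 hu
    rw [dotProduct_add, h1 x hx, h2 y hy, add_zero]

lemma vecMul_apply' {n m : ℕ} (u : Fin n → F) (M : Matrix (Fin n) (Fin m) F) (j : Fin m) :
    (u ᵥ* M) j = Mᵀ j ⬝ᵥ u := by
  simp [Matrix.vecMul, Matrix.transpose_apply, dotProduct, mul_comm]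

/-- The linear map sending a matrix `M` to the linear map `U → F^m`, `u ↦ u ᵥ* M`. -/
noncomputable def psiMap {n m : ℕ} (U : Submodule F (Fin n → F)) :
    Matrix (Fin n) (Fin m) F →ₗ[F] (U →ₗ[F] (Fin m → F)) where
  toFun M := (Matrix.vecMulLinear M).comp U.subtype
  map_add' A B := by
    ext u j
    simp [vecMul_apply', dotProduct, add_mul, Finset.sum_add_distrib]
  map_smul' c A := by
    ext u j
    simp [vecMul_apply', dotProduct, Finset.mul_sum, mul_assoc]

lemma codeCU_perp_eq_map_ker {n m : ℕ} (C : Submodule F (Matrix (Fin n) (Fin m) F))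
    (U : Submodule F (Fin n → F)) :
    codeCU C (perp U) = (LinearMap.ker ((psiMap U).domRestrict C)).map C.subtype := by
  ext M
  simp only [Submodule.mem_map, LinearMap.mem_ker, mem_codeCU, colSpace_le_iff]
  constructor
  · rintro ⟨hC, hcol⟩
    refine ⟨⟨M, hC⟩, ?_, rfl⟩
    ext u j
    have h := hcol j u.1 u.2
    show (↑u ᵥ* M) j = 0
    rw [vecMul_apply']
    exact h
  · rintro ⟨⟨M, hC⟩, hker, rfl⟩
    refine ⟨hC, fun j u hu => ?_⟩
    have h : (((psiMap (m := m) U).domRestrict C) ⟨M, hC⟩) ⟨u, hu⟩ = 0 := by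
      rw [hker]; rfl
    have h2 : (u ᵥ* M) j = 0 := congrFun h j
    rwa [vecMul_apply'] at h2

lemma finrank_bounds {n m : ℕ} (C : Submodule F (Matrix (Fin n) (Fin m) F))
    (U : Submodule F (Fin n → F)) :
    Module.finrank F C ≤ Module.finrank F (codeCU C (perp U)) + Module.finrank F U * m := by
  have hkey : Module.finrank F (codeCU C (perp U)) =
      Module.finrank F (LinearMap.ker ((psiMap (m := m) U).domRestrict C)) := by
    rw [codeCU_perp_eq_map_ker, Submodule.finrank_map_subtype_eq]
  have hrn := LinearMap.finrank_range_add_finrank_ker ((psiMap (m := m) U).domRestrict C)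
  have hrange : Module.finrank F (LinearMap.range ((psiMap (m := m) U).domRestrict C)) ≤
      Module.finrank F U * m := by
    have h1 : Module.finrank F (LinearMap.range ((psiMap (m := m) U).domRestrict C)) ≤
        Module.finrank F (U →ₗ[F] (Fin m → F)) := Submodule.finrank_le _
    have h2 : Module.finrank F (U →ₗ[F] (Fin m → F)) = Module.finrank F U * m := by
      rw [Module.finrank_linearMap]
      simp
    omega
  omega

lemma codeCU_perp_le {n m : ℕ} (C : Submodule F (Matrix (Fin n) (Fin m) F))
    (U : Submodule F (Fin n → F)) :
    Module.finrank F (codeCU C (perp U)) ≤ Module.finrank F C :=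
  Submodule.finrank_mono (codeCU_le_code C (perp U))

end Aux

/-- for an `m`-almost affine rank-metric code, the rank function of `M[C]` is
integer-valued and `M[C]` is a q-matroid (the q-rank axioms hold). -/
theorem almost_affine_qmatroid [Fintype F] {n m : ℕ} (hm : 0 < m)
    (C : Submodule F (Matrix (Fin n) (Fin m) F))
    (hdiv : ∀ U : Submodule F (Fin n → F), m ∣ Module.finrank F (codeCU C U)) :
    (∀ U : Submodule F (Fin n → F), ∃ z : ℤ, rhoCode C U = (z : ℚ)) ∧
    (∀ U : Submodule F (Fin n → F),
      0 ≤ rhoCode C U ∧ rhoCode C U ≤ (Module.finrank F U : ℚ)) ∧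
    (∀ U V : Submodule F (Fin n → F), U ≤ V → rhoCode C U ≤ rhoCode C V) ∧
    (∀ U V : Submodule F (Fin n → F),
      rhoCode C (U ⊓ V) + rhoCode C (U ⊔ V) ≤ rhoCode C U + rhoCode C V) := by
  have hm' : (0 : ℚ) < (m : ℚ) := by exact_mod_cast hm
  have hdC : m ∣ Module.finrank F C := by
    have := hdiv ⊤; rwa [codeCU_top] at this
  refine ⟨?_, ?_, ?_, ?_⟩
  · intro U
    obtain ⟨k, hk⟩ := hdC
    obtain ⟨l, hl⟩ := hdiv (perp U)
    refine ⟨(k : ℤ) - l, ?_⟩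
    rw [rhoCode, hk, hl]
    push_cast
    field_simp
  · intro U
    constructor
    · apply div_nonneg _ hm'.le
      have := codeCU_perp_le C U
      simp only [sub_nonneg]
      exact_mod_cast this
    · rw [rhoCode, div_le_iff₀ hm']
      have h' : ((Module.finrank F C : ℚ)) ≤ (Module.finrank F (codeCU C (perp U)) : ℚ)
          + (Module.finrank F U : ℚ) * (m : ℚ) := by exact_mod_cast finrank_bounds C U
      linarith
  · intro U V hUV
    rw [rhoCode, rhoCode, div_le_div_iff₀ hm' hm']
    have h : Module.finrank F (codeCU C (perp V)) ≤ Module.finrank F (codeCU C (perp U)) :=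
      Submodule.finrank_mono (codeCU_mono C (perp_antitone hUV))
    have h' : ((Module.finrank F (codeCU C (perp V)) : ℚ)) ≤
        (Module.finrank F (codeCU C (perp U)) : ℚ) := by exact_mod_cast h
    nlinarith [hm'.le, h']
  · intro U V
    set A := codeCU C (perp U)
    set B := codeCU C (perp V)
    have hinf : A ⊓ B = codeCU C (perp (U ⊔ V)) := by
      rw [perp_sup, codeCU_inf]
    have hsup : A ⊔ B ≤ codeCU C (perp (U ⊓ V)) := by
      apply sup_le
      · exact codeCU_mono C (perp_antitone inf_le_left)
      · exact codeCU_mono C (perp_antitone inf_le_right)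
    have hdim : Module.finrank F (A ⊔ B : Submodule F _) + Module.finrank F (A ⊓ B : Submodule F _)
        = Module.finrank F A + Module.finrank F B :=
      Submodule.finrank_sup_add_finrank_inf_eq A B
    have h1 : Module.finrank F (A ⊔ B : Submodule F _)
        ≤ Module.finrank F (codeCU C (perp (U ⊓ V))) := Submodule.finrank_mono hsup
    have h2 : Module.finrank F (A ⊓ B : Submodule F _)
        = Module.finrank F (codeCU C (perp (U ⊔ V))) := by rw [hinf]
    simp only [rhoCode, ← add_div]
    rw [div_le_div_iff₀ hm' hm']
    have key : Module.finrank F A + Module.finrank F B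
        ≤ Module.finrank F (codeCU C (perp (U ⊓ V)))
          + Module.finrank F (codeCU C (perp (U ⊔ V))) := by omega
    have key' : ((Module.finrank F A : ℚ)) + (Module.finrank F B : ℚ)
        ≤ (Module.finrank F (codeCU C (perp (U ⊓ V))) : ℚ)
          + (Module.finrank F (codeCU C (perp (U ⊔ V))) : ℚ) := by exact_mod_cast key
    nlinarith [hm'.le, key']
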